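/- The category F(A; ω) of module factorizations of ω over A is equivalent to the category of left modules over the matrix ring Γ = [[A, A], [Aω, A]] (the subring of M₂(A) with lower-left entries in Aω). The equivalence sends a factorization X = (X⁰, X¹; d⁰, d¹) to the column module (X¹; X⁰) with Γ-action defined using d⁰ and d¹. -/
import Mathlib


/-!
STATEMENT 10: The category `F(A; ω)` of module factorizations of `ω` over `A` is
equivalent to the category of left modules over the matrix ring
`Γ = [[A, A], [Aω, A]] ⊆ M₂(A)`, via `X = (X⁰, X¹; d⁰, d¹) ↦ (X¹; X⁰)` with the
`Γ`-action defined using `d⁰` and `d¹`.  The equivalence is expressed elementarily: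
the functor `Φ` is well defined on morphisms, fully faithful, and dense.
-/

universe u v

/-- A module factorization `X = (X⁰, X¹; d⁰, d¹)` of `ω` over `A`: `d⁰ : X⁰ → X¹` is
`A`-linear and `d¹ : X¹ → ᵗ(X⁰)` is `A`-linear, i.e. `d¹ : X¹ → X⁰` is
`σ`-semilinear, with `d¹ ∘ d⁰ = ω_{X⁰}` and `ᵗ(d⁰) ∘ d¹ = ω_{X¹}`. -/
structure MFact (A : Type u) [Ring A] (ω : A) (σ : A ≃+* A) : Type (max u (v + 1)) where
  X0 : ModuleCat.{v} A
  X1 : ModuleCat.{v} A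
  d0 : X0 →ₗ[A] X1
  d1 : X1 →ₛₗ[(σ : A →+* A)] X0
  comp01 : ∀ x : X0, d1 (d0 x) = ω • x
  comp10 : ∀ x : X1, d0 (d1 x) = ω • x

variable {A : Type u} [Ring A] {ω : A} {σ : A ≃+* A}

/-- A morphism of module factorizations. -/
@[ext] structure MFactHom (X Y : MFact.{u, v} A ω σ) where
  f0 : X.X0 →ₗ[A] Y.X0
  f1 : X.X1 →ₗ[A] Y.X1
  comm0 : ∀ x : X.X0, f1 (X.d0 x) = Y.d0 (f0 x)
  comm1 : ∀ x : X.X1, f0 (X.d1 x) = Y.d1 (f1 x)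

/-- Composition of morphisms of module factorizations. -/
def MFactHom.comp {X Y Z : MFact.{u, v} A ω σ} (g : MFactHom Y Z) (f : MFactHom X Y) :
    MFactHom X Z where
  f0 := g.f0 ∘ₗ f.f0
  f1 := g.f1 ∘ₗ f.f1
  comm0 := fun x => by
    simp only [LinearMap.comp_apply, f.comm0 x, g.comm0 (f.f0 x)]
  comm1 := fun x => by
    simp only [LinearMap.comp_apply, f.comm1 x, g.comm1 (f.f1 x)]

variable (ω σ)

/-- The trivial module factorization `θ⁰(M) = (M, M; Id_M, ω_M)`. -/
def theta0 (hσ : ∀ a : A, ω * a = σ a * ω)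
    (M : Type v) [AddCommGroup M] [Module A M] : MFact.{u, v} A ω σ where
  X0 := ModuleCat.of A M
  X1 := ModuleCat.of A M
  d0 := LinearMap.id
  d1 :=
    { toFun := fun m => ω • m
      map_add' := fun x y => smul_add ω x y
      map_smul' := fun a m => by
        simp only [RingHom.coe_coe]
        rw [smul_smul, smul_smul, hσ] }
  comp01 := fun x => rfl
  comp10 := fun x => rfl

/-- The matrix ring `Γ = [[A, A], [Aω, A]]`, as a subring of the ring of `2 × 2`
matrices over `A`: the lower-left entry is required to lie in `Aω`. -/
def Gamma {A : Type u} [Ring A] (ω : A) (σ : A ≃+* A)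
    (hσ : ∀ a : A, ω * a = σ a * ω) : Subring (Matrix (Fin 2) (Fin 2) A) where
  carrier := {m | ∃ a : A, m 1 0 = a * ω}
  zero_mem' := ⟨0, by simp⟩
  one_mem' := ⟨0, by simp [Matrix.one_apply]⟩
  add_mem' := by
    rintro m n ⟨a, ha⟩ ⟨b, hb⟩
    exact ⟨a + b, by simp [Matrix.add_apply, ha, hb, add_mul]⟩
  neg_mem' := by
    rintro m ⟨a, ha⟩
    exact ⟨-a, by simp [Matrix.neg_apply, ha, neg_mul]⟩
  mul_mem' := by
    rintro m n ⟨a, ha⟩ ⟨b, hb⟩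
    refine ⟨a * σ (n 0 0) + m 1 1 * b, ?_⟩
    rw [Matrix.mul_apply, Fin.sum_univ_two, ha, hb, add_mul,
      mul_assoc a ω (n 0 0), hσ (n 0 0), ← mul_assoc, ← mul_assoc]

/-- The chosen `a₂₁` with `(m : Matrix) 1 0 = a₂₁ * ω`, for `m ∈ Γ`. -/
noncomputable def lowEntry {A : Type u} [Ring A] {ω : A} {σ : A ≃+* A}
    {hσ : ∀ a : A, ω * a = σ a * ω} (m : Gamma ω σ hσ) : A :=
  Classical.choose
    (show ∃ a : A, (m : Matrix (Fin 2) (Fin 2) A) 1 0 = a * ω from m.2)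

theorem lowEntry_spec {A : Type u} [Ring A] {ω : A} {σ : A ≃+* A}
    {hσ : ∀ a : A, ω * a = σ a * ω} (m : Gamma ω σ hσ) :
    (m : Matrix (Fin 2) (Fin 2) A) 1 0 = lowEntry m * ω :=
  Classical.choose_spec
    (show ∃ a : A, (m : Matrix (Fin 2) (Fin 2) A) 1 0 = a * ω from m.2)

theorem lowEntry_unique {A : Type u} [Ring A] {ω : A} {σ : A ≃+* A}
    {hσ : ∀ a : A, ω * a = σ a * ω} (hreg : ∀ a : A, a * ω = 0 → a = 0)
    (m : Gamma ω σ hσ) (a : A) (h : (m : Matrix (Fin 2) (Fin 2) A) 1 0 = a * ω) :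
    lowEntry m = a := by
  have h2 : (lowEntry m - a) * ω = 0 := by
    rw [sub_mul, ← h, lowEntry_spec m, sub_self]
  have := hreg _ h2
  rwa [sub_eq_zero] at this

variable {A : Type u} [Ring A] {ω : A} {σ : A ≃+* A}

/-- The `Γ`-action on `Φ(X) = (X¹; X⁰)`:
`[[a₁₁, a₁₂],[a₂₁ω, a₂₂]] • (x¹, x⁰) = (a₁₁x¹ + a₁₂·d⁰(x⁰), a₂₁·d¹(x¹) + a₂₂x⁰)`. -/
noncomputable def phiSMul (hσ : ∀ a : A, ω * a = σ a * ω) (X : MFact.{u, v} A ω σ) :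
    SMul (Gamma ω σ hσ) (X.X1 × X.X0) :=
  ⟨fun m p =>
    ((m : Matrix (Fin 2) (Fin 2) A) 0 0 • p.1
        + (m : Matrix (Fin 2) (Fin 2) A) 0 1 • X.d0 p.2,
      lowEntry m • X.d1 p.1 + (m : Matrix (Fin 2) (Fin 2) A) 1 1 • p.2)⟩

/-- `Φ(X) = (X¹; X⁰)` is a left `Γ`-module. -/
noncomputable def phiModule (hσ : ∀ a : A, ω * a = σ a * ω)
    (hreg : ∀ a : A, a * ω = 0 → a = 0) (X : MFact.{u, v} A ω σ) :
    Module (Gamma ω σ hσ) (X.X1 × X.X0) :=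
  letI := phiSMul hσ X
  Module.ofMinimalAxioms
    (fun m p q => by
      show ((m : Matrix (Fin 2) (Fin 2) A) 0 0 • (p.1 + q.1)
              + (m : Matrix (Fin 2) (Fin 2) A) 0 1 • X.d0 (p.2 + q.2),
            lowEntry m • X.d1 (p.1 + q.1)
              + (m : Matrix (Fin 2) (Fin 2) A) 1 1 • (p.2 + q.2)) = _
      rw [map_add, map_add, smul_add, smul_add, smul_add, smul_add]
      show _ = ((m : Matrix (Fin 2) (Fin 2) A) 0 0 • p.1
              + (m : Matrix (Fin 2) (Fin 2) A) 0 1 • X.d0 p.2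
              + ((m : Matrix (Fin 2) (Fin 2) A) 0 0 • q.1
              + (m : Matrix (Fin 2) (Fin 2) A) 0 1 • X.d0 q.2),
            lowEntry m • X.d1 p.1 + (m : Matrix (Fin 2) (Fin 2) A) 1 1 • p.2
              + (lowEntry m • X.d1 q.1 + (m : Matrix (Fin 2) (Fin 2) A) 1 1 • q.2))
      ext <;> dsimp <;> abel)
    (fun m n p => by
      have hlow : lowEntry (m + n) = lowEntry m + lowEntry n := by
        refine lowEntry_unique hreg _ _ ?_
        show ((m : Matrix (Fin 2) (Fin 2) A) + (n : Matrix (Fin 2) (Fin 2) A)) 1 0 = _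
        rw [Matrix.add_apply, lowEntry_spec m, lowEntry_spec n, add_mul]
      show (((m + n : Gamma ω σ hσ) : Matrix (Fin 2) (Fin 2) A) 0 0 • p.1
              + ((m + n : Gamma ω σ hσ) : Matrix (Fin 2) (Fin 2) A) 0 1 • X.d0 p.2,
            lowEntry (m + n) • X.d1 p.1
              + ((m + n : Gamma ω σ hσ) : Matrix (Fin 2) (Fin 2) A) 1 1 • p.2) = _
      show (((m : Matrix (Fin 2) (Fin 2) A) + (n : Matrix (Fin 2) (Fin 2) A)) 0 0 • p.1
              + ((m : Matrix (Fin 2) (Fin 2) A) + (n : Matrix (Fin 2) (Fin 2) A)) 0 1 • X.d0 p.2,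
            lowEntry (m + n) • X.d1 p.1
              + ((m : Matrix (Fin 2) (Fin 2) A) + (n : Matrix (Fin 2) (Fin 2) A)) 1 1 • p.2) = _
      rw [hlow, Matrix.add_apply, Matrix.add_apply, Matrix.add_apply,
        add_smul, add_smul, add_smul, add_smul]
      show _ = ((m : Matrix (Fin 2) (Fin 2) A) 0 0 • p.1
              + (m : Matrix (Fin 2) (Fin 2) A) 0 1 • X.d0 p.2
              + ((n : Matrix (Fin 2) (Fin 2) A) 0 0 • p.1
              + (n : Matrix (Fin 2) (Fin 2) A) 0 1 • X.d0 p.2),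
            lowEntry m • X.d1 p.1 + (m : Matrix (Fin 2) (Fin 2) A) 1 1 • p.2
              + (lowEntry n • X.d1 p.1 + (n : Matrix (Fin 2) (Fin 2) A) 1 1 • p.2))
      ext <;> dsimp <;> abel)
    (fun m n p => by
      have hmul : ((m * n : Gamma ω σ hσ) : Matrix (Fin 2) (Fin 2) A)
          = (m : Matrix (Fin 2) (Fin 2) A) * (n : Matrix (Fin 2) (Fin 2) A) := rfl
      have hlowmn : lowEntry (m * n)
          = lowEntry m * σ ((n : Matrix (Fin 2) (Fin 2) A) 0 0)
            + (m : Matrix (Fin 2) (Fin 2) A) 1 1 * lowEntry n := by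
        refine lowEntry_unique hreg _ _ ?_
        rw [hmul, Matrix.mul_apply, Fin.sum_univ_two, lowEntry_spec m, lowEntry_spec n,
          add_mul, mul_assoc (lowEntry m) ω _, hσ _, ← mul_assoc, ← mul_assoc]
      show (((m * n : Gamma ω σ hσ) : Matrix (Fin 2) (Fin 2) A) 0 0 • p.1
              + ((m * n : Gamma ω σ hσ) : Matrix (Fin 2) (Fin 2) A) 0 1 • X.d0 p.2,
            lowEntry (m * n) • X.d1 p.1
              + ((m * n : Gamma ω σ hσ) : Matrix (Fin 2) (Fin 2) A) 1 1 • p.2)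
          = ((m : Matrix (Fin 2) (Fin 2) A) 0 0
                • ((n : Matrix (Fin 2) (Fin 2) A) 0 0 • p.1
                  + (n : Matrix (Fin 2) (Fin 2) A) 0 1 • X.d0 p.2)
              + (m : Matrix (Fin 2) (Fin 2) A) 0 1
                • X.d0 (lowEntry n • X.d1 p.1
                  + (n : Matrix (Fin 2) (Fin 2) A) 1 1 • p.2),
            lowEntry m
                • X.d1 ((n : Matrix (Fin 2) (Fin 2) A) 0 0 • p.1
                  + (n : Matrix (Fin 2) (Fin 2) A) 0 1 • X.d0 p.2)
              + (m : Matrix (Fin 2) (Fin 2) A) 1 1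
                • (lowEntry n • X.d1 p.1
                  + (n : Matrix (Fin 2) (Fin 2) A) 1 1 • p.2))
      rw [hmul, hlowmn]
      refine Prod.ext ?_ ?_
      · dsimp only
        rw [map_add, map_smul, map_smul, X.comp10 p.1]
        simp only [Matrix.mul_apply, Fin.sum_univ_two, lowEntry_spec n,
          smul_add, smul_smul, add_smul, mul_assoc]
        abel
      · dsimp only
        rw [map_add, X.d1.map_smulₛₗ, X.d1.map_smulₛₗ, X.comp01 p.2]
        simp only [RingHom.coe_coe, smul_add, smul_smul, add_smul,
          Matrix.mul_apply, Fin.sum_univ_two, lowEntry_spec m]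
        rw [← hσ ((n : Matrix (Fin 2) (Fin 2) A) 0 1)]
        simp only [mul_assoc]
        abel)
    (fun p => by
      have h1 : ((1 : Gamma ω σ hσ) : Matrix (Fin 2) (Fin 2) A) = 1 := rfl
      have hlow : lowEntry (1 : Gamma ω σ hσ) = 0 := by
        refine lowEntry_unique hreg _ _ ?_
        rw [h1, zero_mul]
        simp [Matrix.one_apply]
      show (((1 : Gamma ω σ hσ) : Matrix (Fin 2) (Fin 2) A) 0 0 • p.1
              + ((1 : Gamma ω σ hσ) : Matrix (Fin 2) (Fin 2) A) 0 1 • X.d0 p.2,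
            lowEntry (1 : Gamma ω σ hσ) • X.d1 p.1
              + ((1 : Gamma ω σ hσ) : Matrix (Fin 2) (Fin 2) A) 1 1 • p.2) = p
      rw [hlow, h1]
      simp [Matrix.one_apply])

/-! ### Auxiliary elements of `Γ` and computations -/

section Aux

variable (hσ : ∀ a : A, ω * a = σ a * ω)

/-- The diagonal matrix `diag(a, b)` as an element of `Γ`. -/
def gD (a b : A) : Gamma ω σ hσ := ⟨!![a, 0; 0, b], ⟨0, by simp⟩⟩

/-- The matrix `[[0,1],[0,0]]` as an element of `Γ`. -/
def gU : Gamma ω σ hσ := ⟨!![0, 1; 0, 0], ⟨0, by simp⟩⟩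

/-- The matrix `[[0,0],[ω,0]]` as an element of `Γ`. -/
def gL : Gamma ω σ hσ := ⟨!![0, 0; ω, 0], ⟨1, by simp⟩⟩

theorem gD_mul_gD (a b c d : A) : gD hσ a b * gD hσ c d = gD hσ (a * c) (b * d) :=
  Subtype.ext (by
    ext i j
    fin_cases i <;> fin_cases j <;>
      simp [gD, Matrix.mul_apply, Fin.sum_univ_two])

theorem gD_add_gD (a b c d : A) : gD hσ a b + gD hσ c d = gD hσ (a + c) (b + d) :=
  Subtype.ext (by
    ext i j
    fin_cases i <;> fin_cases j <;>
      simp [gD, Matrix.add_apply])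

theorem gD_one : gD hσ 1 1 = 1 :=
  Subtype.ext (by simp [gD, Matrix.one_fin_two])

theorem gD_zero : gD hσ 0 0 = 0 :=
  Subtype.ext (by
    ext i j
    fin_cases i <;> fin_cases j <;> simp [gD])

theorem gU_mul_gD (a : A) : gU hσ * gD hσ 0 a = gD hσ a 0 * gU hσ :=
  Subtype.ext (by
    ext i j
    fin_cases i <;> fin_cases j <;>
      simp [gU, gD, Matrix.mul_apply, Fin.sum_univ_two])

theorem gL_mul_gD (a : A) : gL hσ * gD hσ a 0 = gD hσ 0 (σ a) * gL hσ :=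
  Subtype.ext (by
    ext i j
    fin_cases i <;> fin_cases j <;>
      simp [gL, gD, Matrix.mul_apply, Fin.sum_univ_two, hσ a])

theorem gL_mul_gU : gL hσ * gU hσ = gD hσ 0 ω :=
  Subtype.ext (by
    ext i j
    fin_cases i <;> fin_cases j <;>
      simp [gL, gU, gD, Matrix.mul_apply, Fin.sum_univ_two])

theorem gU_mul_gL : gU hσ * gL hσ = gD hσ ω 0 :=
  Subtype.ext (by
    ext i j
    fin_cases i <;> fin_cases j <;>
      simp [gL, gU, gD, Matrix.mul_apply, Fin.sum_univ_two])

theorem gDe_mul_gU : gD hσ 1 0 * gU hσ = gU hσ :=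
  Subtype.ext (by
    ext i j
    fin_cases i <;> fin_cases j <;>
      simp [gU, gD, Matrix.mul_apply, Fin.sum_univ_two])

theorem gDf_mul_gL : gD hσ 0 1 * gL hσ = gL hσ :=
  Subtype.ext (by
    ext i j
    fin_cases i <;> fin_cases j <;>
      simp [gL, gD, Matrix.mul_apply, Fin.sum_univ_two])

theorem mul_gDe (m : Gamma ω σ hσ) :
    m * gD hσ 1 0 = gD hσ ((m : Matrix (Fin 2) (Fin 2) A) 0 0) 0
      + gD hσ 0 (lowEntry m) * gL hσ :=
  Subtype.ext (by
    ext i j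
    fin_cases i <;> fin_cases j <;>
      simp [gL, gD, Matrix.mul_apply, Matrix.add_apply, Fin.sum_univ_two,
        lowEntry_spec m])

theorem mul_gDf (m : Gamma ω σ hσ) :
    m * gD hσ 0 1 = gD hσ ((m : Matrix (Fin 2) (Fin 2) A) 0 1) 0 * gU hσ
      + gD hσ 0 ((m : Matrix (Fin 2) (Fin 2) A) 1 1) :=
  Subtype.ext (by
    ext i j
    fin_cases i <;> fin_cases j <;>
      simp [gU, gD, Matrix.mul_apply, Matrix.add_apply, Fin.sum_univ_two])

theorem lowEntry_gD (hreg : ∀ a : A, a * ω = 0 → a = 0) (a b : A) :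
    lowEntry (gD hσ a b) = 0 :=
  lowEntry_unique hreg _ 0 (by simp [gD])

theorem lowEntry_gU (hreg : ∀ a : A, a * ω = 0 → a = 0) : lowEntry (gU hσ) = 0 :=
  lowEntry_unique hreg _ 0 (by simp [gU])

theorem lowEntry_gL (hreg : ∀ a : A, a * ω = 0 → a = 0) : lowEntry (gL hσ) = 1 :=
  lowEntry_unique hreg _ 1 (by simp [gL])

set_option synthInstance.maxHeartbeats 1000000 in
/-- Computation of the action of `gD` on `Φ(X)`. -/
theorem gD_smul (hreg : ∀ a : A, a * ω = 0 → a = 0)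
    (X : MFact.{u, v} A ω σ) (a b : A) (p : X.X1 × X.X0) :
    (letI := phiModule hσ hreg X; gD hσ a b • p) = (a • p.1, b • p.2) := by
  letI := phiModule hσ hreg X
  show (((gD hσ a b : Gamma ω σ hσ) : Matrix (Fin 2) (Fin 2) A) 0 0 • p.1
      + ((gD hσ a b : Gamma ω σ hσ) : Matrix (Fin 2) (Fin 2) A) 0 1 • X.d0 p.2,
    lowEntry (gD hσ a b) • X.d1 p.1
      + ((gD hσ a b : Gamma ω σ hσ) : Matrix (Fin 2) (Fin 2) A) 1 1 • p.2) = _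
  rw [lowEntry_gD hσ hreg]
  simp [gD]

set_option synthInstance.maxHeartbeats 1000000 in
theorem gU_smul (hreg : ∀ a : A, a * ω = 0 → a = 0)
    (X : MFact.{u, v} A ω σ) (p : X.X1 × X.X0) :
    (letI := phiModule hσ hreg X; gU hσ • p) = (X.d0 p.2, 0) := by
  letI := phiModule hσ hreg X
  show (((gU hσ : Gamma ω σ hσ) : Matrix (Fin 2) (Fin 2) A) 0 0 • p.1
      + ((gU hσ : Gamma ω σ hσ) : Matrix (Fin 2) (Fin 2) A) 0 1 • X.d0 p.2,
    lowEntry (gU hσ) • X.d1 p.1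
      + ((gU hσ : Gamma ω σ hσ) : Matrix (Fin 2) (Fin 2) A) 1 1 • p.2) = _
  rw [lowEntry_gU hσ hreg]
  simp [gU]

set_option synthInstance.maxHeartbeats 1000000 in
theorem gL_smul (hreg : ∀ a : A, a * ω = 0 → a = 0)
    (X : MFact.{u, v} A ω σ) (p : X.X1 × X.X0) :
    (letI := phiModule hσ hreg X; gL hσ • p) = (0, X.d1 p.1) := by
  letI := phiModule hσ hreg X
  show (((gL hσ : Gamma ω σ hσ) : Matrix (Fin 2) (Fin 2) A) 0 0 • p.1
      + ((gL hσ : Gamma ω σ hσ) : Matrix (Fin 2) (Fin 2) A) 0 1 • X.d0 p.2,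
    lowEntry (gL hσ) • X.d1 p.1
      + ((gL hσ : Gamma ω σ hσ) : Matrix (Fin 2) (Fin 2) A) 1 1 • p.2) = _
  rw [lowEntry_gL hσ hreg]
  simp [gL]

end Aux

/-! ### The inverse construction: from a `Γ`-module to a module factorization -/

section Psi

variable (hσ : ∀ a : A, ω * a = σ a * ω)
variable (M : Type v) [AddCommGroup M] [Module (Gamma ω σ hσ) M]

/-- The set of fixed points of the action of `γ ∈ Γ`, as an additive subgroup. -/
def fixSub (γ : Gamma ω σ hσ) : AddSubgroup M where
  carrier := {x | γ • x = x}
  zero_mem' := smul_zero γ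
  add_mem' := fun {x y} hx hy => by
    have hx' : γ • x = x := hx
    have hy' : γ • y = y := hy
    show γ • (x + y) = x + y
    rw [smul_add, hx', hy']
  neg_mem' := fun {x} hx => by
    have hx' : γ • x = x := hx
    show γ • (-x) = -x
    rw [smul_neg, hx']

/-- The `A`-module structure on the fixed points of `diag(1,0)`. -/
def smul1 : SMul A (fixSub hσ M (gD hσ 1 0)) :=
  ⟨fun a x => ⟨gD hσ a 0 • x.1, by
    show gD hσ 1 0 • (gD hσ a 0 • x.1) = gD hσ a 0 • x.1
    rw [← mul_smul, gD_mul_gD, one_mul, zero_mul]⟩⟩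

/-- The `A`-module structure on the fixed points of `diag(0,1)`. -/
def smul0 : SMul A (fixSub hσ M (gD hσ 0 1)) :=
  ⟨fun a x => ⟨gD hσ 0 a • x.1, by
    show gD hσ 0 1 • (gD hσ 0 a • x.1) = gD hσ 0 a • x.1
    rw [← mul_smul, gD_mul_gD, one_mul, zero_mul]⟩⟩

def module1 : Module A (fixSub hσ M (gD hσ 1 0)) :=
  letI := smul1 hσ M
  Module.ofMinimalAxioms
    (fun a x y => Subtype.ext (by
      show gD hσ a 0 • (x.1 + y.1) = gD hσ a 0 • x.1 + gD hσ a 0 • y.1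
      rw [smul_add]))
    (fun a b x => Subtype.ext (by
      show gD hσ (a + b) 0 • x.1 = gD hσ a 0 • x.1 + gD hσ b 0 • x.1
      rw [← add_smul, gD_add_gD, add_zero]))
    (fun a b x => Subtype.ext (by
      show gD hσ (a * b) 0 • x.1 = gD hσ a 0 • (gD hσ b 0 • x.1)
      rw [← mul_smul, gD_mul_gD, zero_mul]))
    (fun x => Subtype.ext x.2)

def module0 : Module A (fixSub hσ M (gD hσ 0 1)) :=
  letI := smul0 hσ M
  Module.ofMinimalAxioms
    (fun a x y => Subtype.ext (by
      show gD hσ 0 a • (x.1 + y.1) = gD hσ 0 a • x.1 + gD hσ 0 a • y.1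
      rw [smul_add]))
    (fun a b x => Subtype.ext (by
      show gD hσ 0 (a + b) • x.1 = gD hσ 0 a • x.1 + gD hσ 0 b • x.1
      rw [← add_smul, gD_add_gD, add_zero]))
    (fun a b x => Subtype.ext (by
      show gD hσ 0 (a * b) • x.1 = gD hσ 0 a • (gD hσ 0 b • x.1)
      rw [← mul_smul, gD_mul_gD, zero_mul]))
    (fun x => Subtype.ext x.2)

/-- The module factorization associated to a `Γ`-module `M`. -/
def psiMFact : MFact.{u, v} A ω σ :=
  letI := module1 hσ M
  letI := module0 hσ M
  { X0 := ModuleCat.of A (fixSub hσ M (gD hσ 0 1))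
    X1 := ModuleCat.of A (fixSub hσ M (gD hσ 1 0))
    d0 :=
      { toFun := fun x => ⟨gU hσ • x.1, by
          show gD hσ 1 0 • (gU hσ • x.1) = gU hσ • x.1
          rw [← mul_smul, gDe_mul_gU]⟩
        map_add' := fun x y => Subtype.ext (by
          show gU hσ • (x.1 + y.1) = gU hσ • x.1 + gU hσ • y.1
          rw [smul_add])
        map_smul' := fun a x => Subtype.ext (by
          show gU hσ • (gD hσ 0 a • x.1) = gD hσ a 0 • (gU hσ • x.1)
          rw [← mul_smul, ← mul_smul, gU_mul_gD]) }
    d1 :=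
      { toFun := fun x => ⟨gL hσ • x.1, by
          show gD hσ 0 1 • (gL hσ • x.1) = gL hσ • x.1
          rw [← mul_smul, gDf_mul_gL]⟩
        map_add' := fun x y => Subtype.ext (by
          show gL hσ • (x.1 + y.1) = gL hσ • x.1 + gL hσ • y.1
          rw [smul_add])
        map_smul' := fun a x => Subtype.ext (by
          show gL hσ • (gD hσ a 0 • x.1) = gD hσ 0 (σ a) • (gL hσ • x.1)
          rw [← mul_smul, ← mul_smul, gL_mul_gD]) }
    comp01 := fun x => Subtype.ext (by
      show gL hσ • (gU hσ • x.1) = gD hσ 0 ω • x.1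
      rw [← mul_smul, gL_mul_gU])
    comp10 := fun x => Subtype.ext (by
      show gU hσ • (gL hσ • x.1) = gD hσ ω 0 • x.1
      rw [← mul_smul, gU_mul_gL]) }

end Psi

set_option maxHeartbeats 2000000
set_option synthInstance.maxHeartbeats 2000000

theorem factorizations_equiv_gamma_modules
    (hσ : ∀ a : A, ω * a = σ a * ω)
    (hreg : ∀ a : A, a * ω = 0 → a = 0) (hreg' : ∀ a : A, ω * a = 0 → a = 0) :
    -- `Φ` is well defined on morphisms, and fully faithful
    (∀ X Y : MFact.{u, v} A ω σ,
      letI := phiModule hσ hreg X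
      letI := phiModule hσ hreg Y
      (∀ f : MFactHom X Y,
        ∃ g : (X.X1 × X.X0) →ₗ[Gamma ω σ hσ] (Y.X1 × Y.X0),
          ∀ p : X.X1 × X.X0, g p = (f.f1 p.1, f.f0 p.2)) ∧
      (∀ g : (X.X1 × X.X0) →ₗ[Gamma ω σ hσ] (Y.X1 × Y.X0),
        ∃! f : MFactHom X Y, ∀ p : X.X1 × X.X0, g p = (f.f1 p.1, f.f0 p.2))) ∧
    -- `Φ` is dense
    (∀ (M : Type v) [AddCommGroup M] [Module (Gamma ω σ hσ) M],
      ∃ X : MFact.{u, v} A ω σ,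
        letI := phiModule hσ hreg X
        Nonempty ((X.X1 × X.X0) ≃ₗ[Gamma ω σ hσ] M)) := by
  constructor
  · intro X Y
    letI := phiModule hσ hreg X
    letI := phiModule hσ hreg Y
    constructor
    · -- Φ is well defined on morphisms
      intro f
      refine ⟨{ toFun := fun p => (f.f1 p.1, f.f0 p.2)
                map_add' := fun p q => by
                  show (f.f1 (p.1 + q.1), f.f0 (p.2 + q.2)) = _
                  rw [map_add, map_add]; rfl
                map_smul' := fun m p => by
                  show (f.f1 ((m : Matrix (Fin 2) (Fin 2) A) 0 0 • p.1
                        + (m : Matrix (Fin 2) (Fin 2) A) 0 1 • X.d0 p.2),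
                      f.f0 (lowEntry m • X.d1 p.1
                        + (m : Matrix (Fin 2) (Fin 2) A) 1 1 • p.2))
                    = ((m : Matrix (Fin 2) (Fin 2) A) 0 0 • f.f1 p.1
                        + (m : Matrix (Fin 2) (Fin 2) A) 0 1 • Y.d0 (f.f0 p.2),
                      lowEntry m • Y.d1 (f.f1 p.1)
                        + (m : Matrix (Fin 2) (Fin 2) A) 1 1 • f.f0 p.2)
                  rw [map_add, map_add, map_smul, map_smul, map_smul, map_smul,
                    f.comm0, f.comm1]
            }, fun p => rfl⟩
    · -- Φ is fully faithful
      intro g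
      have key1 : ∀ x : X.X1, g (x, 0) = ((g (x, 0)).1, 0) := by
        intro x
        have h : ((x, 0) : X.X1 × X.X0) = gD hσ 1 0 • ((x, 0) : X.X1 × X.X0) := by
          rw [gD_smul hσ hreg X, one_smul, smul_zero]
        calc g (x, 0) = g (gD hσ 1 0 • ((x, 0) : X.X1 × X.X0)) := by rw [← h]
          _ = gD hσ 1 0 • g (x, 0) := map_smul g _ _
          _ = (1 • (g (x, 0)).1, 0 • (g (x, 0)).2) := gD_smul hσ hreg Y _ _ _
          _ = ((g (x, 0)).1, 0) := by rw [one_smul, zero_smul]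
      have key0 : ∀ x : X.X0, g (0, x) = (0, (g (0, x)).2) := by
        intro x
        have h : ((0, x) : X.X1 × X.X0) = gD hσ 0 1 • ((0, x) : X.X1 × X.X0) := by
          rw [gD_smul hσ hreg X, one_smul, smul_zero]
        calc g (0, x) = g (gD hσ 0 1 • ((0, x) : X.X1 × X.X0)) := by rw [← h]
          _ = gD hσ 0 1 • g (0, x) := map_smul g _ _
          _ = (0 • (g (0, x)).1, 1 • (g (0, x)).2) := gD_smul hσ hreg Y _ _ _
          _ = (0, (g (0, x)).2) := by rw [one_smul, zero_smul]
      have keyD : ∀ a : A, ∀ x : X.X1, g (a • x, 0) = (a • (g (x, 0)).1, 0) := by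
        intro a x
        have h : ((a • x, 0) : X.X1 × X.X0) = gD hσ a 0 • ((x, 0) : X.X1 × X.X0) := by
          rw [gD_smul hσ hreg X, smul_zero]
        rw [h, map_smul g, gD_smul hσ hreg Y, key1 x, zero_smul]
      have keyD0 : ∀ a : A, ∀ x : X.X0, g (0, a • x) = (0, a • (g (0, x)).2) := by
        intro a x
        have h : ((0, a • x) : X.X1 × X.X0) = gD hσ 0 a • ((0, x) : X.X1 × X.X0) := by
          rw [gD_smul hσ hreg X, smul_zero]
        rw [h, map_smul g, gD_smul hσ hreg Y, key0 x, zero_smul]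
      refine ⟨{
              f0 :=
                { toFun := fun x => (g (0, x)).2
                  map_add' := fun x y => by
                    show (g (0, x + y)).2 = (g (0, x)).2 + (g (0, y)).2
                    have h : ((0, x + y) : X.X1 × X.X0) = (0, x) + (0, y) := by
                      rw [Prod.mk_add_mk, add_zero]
                    rw [h, map_add]; rfl
                  map_smul' := fun a x => by
                    show (g (0, a • x)).2 = a • (g (0, x)).2
                    rw [keyD0 a x]
                }
              f1 :=
                { toFun := fun x => (g (x, 0)).1
                  map_add' := fun x y => by
                    show (g (x + y, 0)).1 = (g (x, 0)).1 + (g (y, 0)).1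
                    have h : ((x + y, 0) : X.X1 × X.X0) = (x, 0) + (y, 0) := by
                      rw [Prod.mk_add_mk, add_zero]
                    rw [h, map_add]; rfl
                  map_smul' := fun a x => by
                    show (g (a • x, 0)).1 = a • (g (x, 0)).1
                    rw [keyD a x]
                }
              comm0 := fun x => by
                show (g (X.d0 x, 0)).1 = Y.d0 (g (0, x)).2
                have h : ((X.d0 x, 0) : X.X1 × X.X0)
                    = gU hσ • ((0, x) : X.X1 × X.X0) :=
                  (gU_smul hσ hreg X (0, x)).symm
                rw [h, map_smul g, gU_smul hσ hreg Y]
              comm1 := fun x => by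
                show (g (0, X.d1 x)).2 = Y.d1 (g (x, 0)).1
                have h : ((0, X.d1 x) : X.X1 × X.X0)
                    = gL hσ • ((x, 0) : X.X1 × X.X0) :=
                  (gL_smul hσ hreg X (x, 0)).symm
                rw [h, map_smul g, gL_smul hσ hreg Y]
            }, ?_, ?_⟩
      · -- g agrees with the induced morphism
        intro p
        have hp : p = ((p.1, 0) : X.X1 × X.X0) + ((0, p.2) : X.X1 × X.X0) := by
          rw [Prod.mk_add_mk, add_zero, zero_add]
        show g p = ((g (p.1, 0)).1, (g (0, p.2)).2)
        conv_lhs => rw [hp]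
        rw [map_add, key1 p.1, key0 p.2, Prod.mk_add_mk, add_zero, zero_add]
      · -- uniqueness
        intro f' hf'
        refine MFactHom.ext ?_ ?_
        · exact LinearMap.ext fun x => ((congrArg Prod.snd (hf' (0, x))).symm :)
        · exact LinearMap.ext fun x => ((congrArg Prod.fst (hf' (x, 0))).symm :)
  · -- Φ is dense
    intro M _ _
    refine ⟨psiMFact hσ M, ?_⟩
    letI := phiModule hσ hreg (psiMFact hσ M)
    letI := module1 hσ M
    letI := module0 hσ M
    have fix1 : ∀ x : (psiMFact hσ M).X1, gD hσ 1 0 • (x.1 : M) = x.1 := fun x => x.2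
    have fix0 : ∀ x : (psiMFact hσ M).X0, gD hσ 0 1 • (x.1 : M) = x.1 := fun x => x.2
    refine ⟨{
      toFun := fun p => (p.1.1 : M) + p.2.1
      map_add' := fun p q => by
        show ((p.1 + q.1).1 : M) + (p.2 + q.2).1 = (p.1.1 + p.2.1) + (q.1.1 + q.2.1)
        show ((p.1.1 + q.1.1 : M)) + (p.2.1 + q.2.1) = (p.1.1 + p.2.1) + (q.1.1 + q.2.1)
        abel
      map_smul' := fun m p => by
        rw [RingHom.id_apply]
        show (((m : Matrix (Fin 2) (Fin 2) A) 0 0 • p.1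
              + (m : Matrix (Fin 2) (Fin 2) A) 0 1 • (psiMFact hσ M).d0 p.2).1 : M)
            + (lowEntry m • (psiMFact hσ M).d1 p.1
              + (m : Matrix (Fin 2) (Fin 2) A) 1 1 • p.2).1
          = m • ((p.1.1 : M) + p.2.1)
        show (gD hσ ((m : Matrix (Fin 2) (Fin 2) A) 0 0) 0 • (p.1.1 : M)
              + gD hσ ((m : Matrix (Fin 2) (Fin 2) A) 0 1) 0 • (gU hσ • (p.2.1 : M)))
            + (gD hσ 0 (lowEntry m) • (gL hσ • (p.1.1 : M))
              + gD hσ 0 ((m : Matrix (Fin 2) (Fin 2) A) 1 1) • (p.2.1 : M))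
          = m • ((p.1.1 : M) + p.2.1)
        have h1 : m • (p.1.1 : M) = (m * gD hσ 1 0) • (p.1.1 : M) := by
          rw [mul_smul, fix1 p.1]
        have h2 : m • (p.2.1 : M) = (m * gD hσ 0 1) • (p.2.1 : M) := by
          rw [mul_smul, fix0 p.2]
        rw [smul_add, h1, h2, mul_gDe, mul_gDf, add_smul, add_smul, mul_smul, mul_smul]
        abel
      invFun := fun x =>
        (⟨gD hσ 1 0 • x, by
            show gD hσ 1 0 • (gD hσ 1 0 • x) = gD hσ 1 0 • x
            rw [← mul_smul, gD_mul_gD, one_mul, zero_mul]⟩,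
         ⟨gD hσ 0 1 • x, by
            show gD hσ 0 1 • (gD hσ 0 1 • x) = gD hσ 0 1 • x
            rw [← mul_smul, gD_mul_gD, one_mul, zero_mul]⟩)
      left_inv := fun p => by
        refine Prod.ext (Subtype.ext ?_) (Subtype.ext ?_)
        · show gD hσ 1 0 • ((p.1.1 : M) + p.2.1) = p.1.1
          rw [smul_add, fix1 p.1, ← fix0 p.2, ← mul_smul, gD_mul_gD, mul_zero,
            zero_mul, gD_zero, zero_smul, add_zero]
        · show gD hσ 0 1 • ((p.1.1 : M) + p.2.1) = p.2.1
          rw [smul_add, fix0 p.2, ← fix1 p.1, ← mul_smul, gD_mul_gD, mul_zero,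
            zero_mul, gD_zero, zero_smul, zero_add]
      right_inv := fun x => by
        show gD hσ 1 0 • x + gD hσ 0 1 • x = x
        rw [← add_smul, gD_add_gD, add_zero, zero_add, gD_one, one_smul]
    }⟩
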